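/- For a Hurwitz matrix A (all eigenvalues have negative real part), the frequency-limited controllability Gramian P_ω = (1/2π) ∫_{-ω}^{ω} (jνI - A)^{-1} B Bᵀ (jνI - A)^{-*} dν satisfies the Lyapunov equation A P_ω + P_ω Aᵀ + F_ω B Bᵀ + B Bᵀ F_ω* = 0, where F_ω = (1/2π) ∫_{-ω}^{ω} (jνI - A)^{-1} dν. -/

import Mathlib

set_option maxHeartbeats 4000000


open Matrix

/-- The resolvMat `(jνI - A)⁻¹`. -/
noncomputable def resolvMat {n : ℕ} (A : Matrix (Fin n) (Fin n) ℂ) (ν : ℝ) :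
    Matrix (Fin n) (Fin n) ℂ :=
  ((Complex.I * (ν : ℂ)) • (1 : Matrix (Fin n) (Fin n) ℂ) - A)⁻¹

/-- Frequency-limited controllability Gramian
`P_ω = (1/2π) ∫_{-ω}^{ω} (jνI - A)⁻¹ B Bᴴ (jνI - A)⁻ᴴ dν` (entrywise integral). -/
noncomputable def Pfl {n m : ℕ} (A : Matrix (Fin n) (Fin n) ℂ)
    (B : Matrix (Fin n) (Fin m) ℂ) (ω : ℝ) : Matrix (Fin n) (Fin n) ℂ :=
  Matrix.of fun i j => (1 / (2 * (Real.pi : ℂ))) *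
    ∫ ν in (-ω)..ω, (resolvMat A ν * B * Bᴴ * (resolvMat A ν)ᴴ) i j

/-- `F_ω = (1/2π) ∫_{-ω}^{ω} (jνI - A)⁻¹ dν` (entrywise integral). -/
noncomputable def Ffl {n : ℕ} (A : Matrix (Fin n) (Fin n) ℂ) (ω : ℝ) :
    Matrix (Fin n) (Fin n) ℂ :=
  Matrix.of fun i j => (1 / (2 * (Real.pi : ℂ))) * ∫ ν in (-ω)..ω, resolvMat A ν i j


open MeasureTheory intervalIntegral

noncomputable def matInt {p q : ℕ} (a b : ℝ) (f : ℝ → Matrix (Fin p) (Fin q) ℂ) :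
    Matrix (Fin p) (Fin q) ℂ :=
  Matrix.of fun i j => ∫ ν in a..b, f ν i j

lemma matInt_apply {p q : ℕ} (a b : ℝ) (f : ℝ → Matrix (Fin p) (Fin q) ℂ) (i j) :
    matInt a b f i j = ∫ ν in a..b, f ν i j := rfl

lemma matInt_mul_left {p q r : ℕ} (a b : ℝ) (C : Matrix (Fin p) (Fin q) ℂ)
    (f : ℝ → Matrix (Fin q) (Fin r) ℂ)
    (hf : ∀ i j, IntervalIntegrable (fun ν => f ν i j) volume a b) :
    C * matInt a b f = matInt a b (fun ν => C * f ν) := by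
  ext i j
  simp only [matInt_apply, Matrix.mul_apply]
  rw [intervalIntegral.integral_finset_sum (fun k _ => (hf k j).const_mul (C i k))]
  simp [intervalIntegral.integral_const_mul]

lemma matInt_mul_right {p q r : ℕ} (a b : ℝ) (C : Matrix (Fin q) (Fin r) ℂ)
    (f : ℝ → Matrix (Fin p) (Fin q) ℂ)
    (hf : ∀ i j, IntervalIntegrable (fun ν => f ν i j) volume a b) :
    matInt a b f * C = matInt a b (fun ν => f ν * C) := by
  ext i j
  simp only [matInt_apply, Matrix.mul_apply]
  rw [intervalIntegral.integral_finset_sum (fun k _ => (hf i k).mul_const (C k j))]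
  simp [intervalIntegral.integral_mul_const]

lemma matInt_conjT {p q : ℕ} (a b : ℝ) (f : ℝ → Matrix (Fin p) (Fin q) ℂ) :
    (matInt a b f)ᴴ = matInt a b (fun ν => (f ν)ᴴ) := by
  have key : ∀ g : ℝ → ℂ, (starRingEnd ℂ) (∫ ν in a..b, g ν)
      = ∫ ν in a..b, (starRingEnd ℂ) (g ν) := by
    intro g
    rw [intervalIntegral, intervalIntegral, map_sub, ← integral_conj, ← integral_conj]
  ext i j
  simp only [matInt_apply, Matrix.conjTranspose_apply]
  exact key fun ν => f ν j i

lemma matInt_add {p q : ℕ} (a b : ℝ) (f g : ℝ → Matrix (Fin p) (Fin q) ℂ)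
    (hf : ∀ i j, IntervalIntegrable (fun ν => f ν i j) volume a b)
    (hg : ∀ i j, IntervalIntegrable (fun ν => g ν i j) volume a b) :
    matInt a b f + matInt a b g = matInt a b (fun ν => f ν + g ν) := by
  ext i j
  simp only [matInt_apply, Matrix.add_apply]
  rw [← intervalIntegral.integral_add (hf i j) (hg i j)]

lemma matInt_congr_zero {p q : ℕ} (a b : ℝ) (f : ℝ → Matrix (Fin p) (Fin q) ℂ)
    (h : ∀ ν, f ν = 0) : matInt a b f = 0 := by
  ext i j
  simp [matInt_apply, h]

/-- for a Hurwitz real matrix `A`, the frequency-limited controllability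
Gramian satisfies the Lyapunov equation `A P_ω + P_ω Aᵀ + F_ω B Bᵀ + B Bᵀ F_ω* = 0`. -/
theorem flimited_ctrb_gramian_lyapunov
    {n m : ℕ} (A : Matrix (Fin n) (Fin n) ℝ) (B : Matrix (Fin n) (Fin m) ℝ)
    (hA : ∀ μ ∈ spectrum ℂ (A.map Complex.ofReal), μ.re < 0)
    (ω : ℝ) (hω : 0 < ω) :
    A.map Complex.ofReal * Pfl (A.map Complex.ofReal) (B.map Complex.ofReal) ω
      + Pfl (A.map Complex.ofReal) (B.map Complex.ofReal) ω * (A.map Complex.ofReal)ᵀ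
      + Ffl (A.map Complex.ofReal) ω * (B.map Complex.ofReal * (B.map Complex.ofReal)ᵀ)
      + B.map Complex.ofReal * (B.map Complex.ofReal)ᵀ * (Ffl (A.map Complex.ofReal) ω)ᴴ
      = 0 := by
  set Ac := A.map Complex.ofReal with hAc
  set Bc := B.map Complex.ofReal with hBc
  have hAT : Acᵀ = Acᴴ := by
    ext i j
    simp [hAc, Matrix.conjTranspose_apply, Matrix.map_apply, Complex.conj_ofReal]
  have hBT : Bcᵀ = Bcᴴ := by
    ext i j
    simp [hBc, Matrix.conjTranspose_apply, Matrix.map_apply, Complex.conj_ofReal]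
  set M : ℝ → Matrix (Fin n) (Fin n) ℂ :=
    fun ν => (Complex.I * (ν : ℂ)) • (1 : Matrix (Fin n) (Fin n) ℂ) - Ac with hM
  have hunit : ∀ ν : ℝ, IsUnit (M ν) := by
    intro ν
    by_contra h
    have hmem : (Complex.I * (ν : ℂ)) ∈ spectrum ℂ Ac := by
      rw [spectrum.mem_iff]
      simpa [hM, Algebra.algebraMap_eq_smul_one] using h
    have := hA _ hmem
    simp [Complex.mul_re] at this
  have hdet : ∀ ν : ℝ, IsUnit (M ν).det := fun ν => (Matrix.isUnit_iff_isUnit_det _).1 (hunit ν)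
  have hMR : ∀ ν : ℝ, M ν * resolvMat Ac ν = 1 := fun ν =>
    Matrix.mul_nonsing_inv _ (hdet ν)
  have hMcont : Continuous M :=
    ((continuous_const.mul Complex.continuous_ofReal).smul continuous_const).sub
      continuous_const
  have hRcont : Continuous fun ν => resolvMat Ac ν := by
    have hinvdef : ∀ ν : ℝ, resolvMat Ac ν = (Ring.inverse (M ν).det) • (M ν).adjugate :=
      fun ν => Matrix.inv_def _
    rw [funext hinvdef]
    refine Continuous.smul (f := fun ν => Ring.inverse (M ν).det) ?_ hMcont.matrix_adjugate
    have hdne : ∀ ν : ℝ, (M ν).det ≠ 0 := fun ν => (hdet ν).ne_zero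
    have hcinv : Continuous fun ν => ((M ν).det)⁻¹ := hMcont.matrix_det.inv₀ hdne
    simpa [Ring.inverse_eq_inv'] using hcinv
  set R : ℝ → Matrix (Fin n) (Fin n) ℂ := fun ν => resolvMat Ac ν with hR
  set G : ℝ → Matrix (Fin n) (Fin n) ℂ := fun ν => R ν * Bc * Bcᴴ * (R ν)ᴴ with hG
  have hGcont : Continuous G :=
    ((hRcont.matrix_mul continuous_const).matrix_mul continuous_const).matrix_mul
      hRcont.matrix_conjTranspose
  have hGint : ∀ (i j : Fin n), IntervalIntegrable (fun ν => G ν i j) volume (-ω) ω :=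
    fun i j => (hGcont.matrix_elem i j).intervalIntegrable _ _
  have hRint : ∀ (i j : Fin n), IntervalIntegrable (fun ν => R ν i j) volume (-ω) ω :=
    fun i j => (hRcont.matrix_elem i j).intervalIntegrable _ _
  have key : ∀ ν : ℝ, Ac * G ν + G ν * Acᴴ + R ν * (Bc * Bcᴴ) + Bc * Bcᴴ * (R ν)ᴴ = 0 := by
    intro ν
    have hAr : Ac * R ν = (Complex.I * (ν : ℂ)) • R ν - 1 := by
      have h1 : ((Complex.I * (ν : ℂ)) • (1 : Matrix (Fin n) (Fin n) ℂ) - M ν) * R ν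
          = (Complex.I * (ν : ℂ)) • R ν - 1 := by
        rw [Matrix.sub_mul, Matrix.smul_mul, Matrix.one_mul, hMR ν]
      simpa [hM, sub_sub_cancel] using h1
    have hrA : (R ν)ᴴ * Acᴴ = (-(Complex.I * (ν : ℂ))) • (R ν)ᴴ - 1 := by
      calc (R ν)ᴴ * Acᴴ = (Ac * R ν)ᴴ := (Matrix.conjTranspose_mul _ _).symm
        _ = ((Complex.I * (ν : ℂ)) • R ν - 1)ᴴ := by rw [hAr]
        _ = (-(Complex.I * (ν : ℂ))) • (R ν)ᴴ - 1 := by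
            simp [Matrix.conjTranspose_smul, Complex.conj_ofReal, Complex.conj_I,
              Matrix.conjTranspose_sub, neg_mul, neg_smul]
    have e1 : Ac * G ν = (Complex.I * (ν : ℂ)) • G ν - Bc * Bcᴴ * (R ν)ᴴ := by
      calc Ac * G ν = (Ac * R ν) * (Bc * Bcᴴ * (R ν)ᴴ) := by
            simp only [hG, Matrix.mul_assoc]
        _ = ((Complex.I * (ν : ℂ)) • R ν - 1) * (Bc * Bcᴴ * (R ν)ᴴ) := by rw [hAr]
        _ = (Complex.I * (ν : ℂ)) • G ν - Bc * Bcᴴ * (R ν)ᴴ := by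
            simp only [hG, Matrix.sub_mul, Matrix.smul_mul, Matrix.one_mul, Matrix.mul_assoc]
    have e2 : G ν * Acᴴ = (-(Complex.I * (ν : ℂ))) • G ν - R ν * (Bc * Bcᴴ) := by
      calc G ν * Acᴴ = (R ν * (Bc * Bcᴴ)) * ((R ν)ᴴ * Acᴴ) := by
            simp only [hG, Matrix.mul_assoc]
        _ = (R ν * (Bc * Bcᴴ)) * ((-(Complex.I * (ν : ℂ))) • (R ν)ᴴ - 1) := by rw [hrA]
        _ = (-(Complex.I * (ν : ℂ))) • G ν - R ν * (Bc * Bcᴴ) := by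
            simp only [hG, Matrix.mul_sub, Matrix.mul_smul, Matrix.mul_one, Matrix.mul_assoc]
    rw [e1, e2]
    simp only [neg_smul]
    abel
  have hPfl : Pfl Ac Bc ω = (1 / (2 * (Real.pi : ℂ))) • matInt (-ω) ω G := by
    ext i j
    simp [Pfl, matInt_apply, Matrix.smul_apply, smul_eq_mul, hG, hR]
  have hFfl : Ffl Ac ω = (1 / (2 * (Real.pi : ℂ))) • matInt (-ω) ω R := by
    ext i j
    simp [Ffl, matInt_apply, Matrix.smul_apply, smul_eq_mul, hR]
  rw [hAT, hBT, hPfl, hFfl]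
  set c := (1 / (2 * (Real.pi : ℂ))) with hc
  have hcc : star c = c := by
    rw [Complex.star_def]
    simp [hc, map_div₀, _root_.map_mul, Complex.conj_ofReal, map_ofNat, _root_.map_one]
  rw [Matrix.conjTranspose_smul, hcc, matInt_conjT]
  rw [Matrix.mul_smul, Matrix.smul_mul, Matrix.smul_mul, Matrix.mul_smul]
  rw [matInt_mul_left _ _ _ _ hGint, matInt_mul_right _ _ _ _ hGint,
    matInt_mul_right _ _ _ _ hRint,
    matInt_mul_left (-ω) ω (Bc * Bcᴴ) (fun ν => (R ν)ᴴ)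
      (fun i j => ((hRcont.matrix_conjTranspose.matrix_elem i j).intervalIntegrable _ _))]
  have i1 : ∀ (i j : Fin n), IntervalIntegrable (fun ν => (Ac * G ν) i j) volume (-ω) ω :=
    fun i j => (((continuous_const.matrix_mul hGcont).matrix_elem i j).intervalIntegrable _ _)
  have i2 : ∀ (i j : Fin n), IntervalIntegrable (fun ν => (G ν * Acᴴ) i j) volume (-ω) ω :=
    fun i j => (((hGcont.matrix_mul continuous_const).matrix_elem i j).intervalIntegrable _ _)
  have i3 : ∀ (i j : Fin n), IntervalIntegrable (fun ν => (R ν * (Bc * Bcᴴ)) i j) volume (-ω) ω :=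
    fun i j => (((hRcont.matrix_mul continuous_const).matrix_elem i j).intervalIntegrable _ _)
  have i4 : ∀ (i j : Fin n), IntervalIntegrable (fun ν => (Bc * Bcᴴ * (R ν)ᴴ) i j) volume (-ω) ω :=
    fun i j => (((continuous_const.matrix_mul hRcont.matrix_conjTranspose).matrix_elem i j).intervalIntegrable _ _)
  have i12 : ∀ (i j : Fin n),
      IntervalIntegrable (fun ν => (Ac * G ν + G ν * Acᴴ) i j) volume (-ω) ω :=
    fun i j => by simpa [Matrix.add_apply] using (i1 i j).add (i2 i j)
  have i123 : ∀ (i j : Fin n),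
      IntervalIntegrable (fun ν => (Ac * G ν + G ν * Acᴴ + R ν * (Bc * Bcᴴ)) i j)
        volume (-ω) ω :=
    fun i j => by simpa [Matrix.add_apply] using (i12 i j).add (i3 i j)
  rw [← smul_add, ← smul_add, ← smul_add,
    matInt_add (-ω) ω (fun ν => Ac * G ν) (fun ν => G ν * Acᴴ) i1 i2,
    matInt_add (-ω) ω (fun ν => Ac * G ν + G ν * Acᴴ) (fun ν => R ν * (Bc * Bcᴴ)) i12 i3,
    matInt_add (-ω) ω (fun ν => Ac * G ν + G ν * Acᴴ + R ν * (Bc * Bcᴴ))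
      (fun ν => Bc * Bcᴴ * (R ν)ᴴ) i123 i4,
    matInt_congr_zero (-ω) ω _ key, smul_zero]
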